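/- Let x₀, ..., x_{m+1} be m+2 points in ℝⁿ belonging to a set Σ, let T = conv(x₀, ..., x_{m+1}) and d = diam{x₀, ..., x_{m+1}}. Then there is a constant C = C(m,n) such that H^{m+1}(T) ≤ C · β_Σ^m(x₀, d) · d^{m+1}, where β_Σ^m is the Jones beta number of Σ. Consequently the discrete curvature satisfies K(x₀,...,x_{m+1}) ≤ C β_Σ^m(x₀, d)/d. -/

import Mathlib

open MeasureTheory Set Real ENNReal

/-- The Jones beta number `β_E^m(x, r)`: the infimum over `m`-dimensional linear
subspaces `H ⊆ ℝⁿ` of `sup_{y ∈ E ∩ B(x,r)} dist(y, x + H)/r`. -/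
noncomputable def jonesBeta (m : ℕ) {n : ℕ} (E : Set (EuclideanSpace ℝ (Fin n)))
    (x : EuclideanSpace ℝ (Fin n)) (r : ℝ) : ℝ :=
  ⨅ H : {H : Submodule ℝ (EuclideanSpace ℝ (Fin n)) // Module.finrank ℝ H = m},
    ⨆ y : ↥(E ∩ Metric.closedBall x r),
      Metric.infDist (y : EuclideanSpace ℝ (Fin n))
        ((fun v => x + v) '' (H.1 : Set (EuclideanSpace ℝ (Fin n)))) / r

/-- The discrete curvature `K(x₀,…,x_{m+1}) = H^{m+1}(conv{x₀,…,x_{m+1}})/diam^{m+2}`. -/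
noncomputable def discreteCurv {n : ℕ} (m : ℕ) (x : Fin (m + 2) → EuclideanSpace ℝ (Fin n)) : ℝ :=
  (μH[(m + 1 : ℝ)] (convexHull ℝ (Set.range x))).toReal / Metric.diam (Set.range x) ^ (m + 2)




open NNReal


lemma euclid_ball_bound (k : ℕ) {v : EuclideanSpace ℝ (Fin k)} {r : ℝ} (hr : 0 ≤ r)
    {s : Set (EuclideanSpace ℝ (Fin k))} (hs : s ⊆ Metric.closedBall v r) :
    μH[(k:ℝ)] s ≤ ENNReal.ofReal (((k:ℝ) * (2*r))^k) := by
  have hanti := PiLp.antilipschitzWith_ofLp 2 (fun _ : Fin k => ℝ)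
  have hlip := PiLp.lipschitzWith_ofLp 2 (fun _ : Fin k => ℝ)
  set e := @WithLp.ofLp 2 (Fin k → ℝ)
  have h1 : μH[(k:ℝ)] s ≤ _ * μH[(k:ℝ)] (e '' s) :=
    hanti.le_hausdorffMeasure_image (by positivity) s
  have h2 : e '' s ⊆ Metric.closedBall (e v) r := by
    rintro y ⟨a, ha, rfl⟩
    have := (hlip.dist_le_mul a v)
    have hav : dist a v ≤ r := hs ha
    simpa using le_trans this (by simpa using hav)
  have h3 : μH[(k:ℝ)] (e '' s) ≤ ENNReal.ofReal ((2*r)^k) := by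
    calc μH[(k:ℝ)] (e '' s) ≤ μH[(k:ℝ)] (Metric.closedBall (e v) r) := measure_mono h2
    _ = ENNReal.ofReal ((2*r)^k) := by
        rw [show ((k:ℝ)) = ((Fintype.card (Fin k) : ℕ):ℝ) by simp, hausdorffMeasure_pi_real,
          Real.volume_pi_closedBall _ hr, Fintype.card_fin]
  have e1 : ((Fintype.card (Fin k) : ℝ≥0) ^ ((1:ℝ≥0∞)/2).toReal) ≤ ((k:ℝ≥0)) := by
    rw [Fintype.card_fin]
    have h12 : ((1:ℝ≥0∞)/2).toReal = (1/2 : ℝ) := by norm_num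
    rw [h12]
    rcases Nat.eq_zero_or_pos k with hk | hk
    · subst hk; simp [NNReal.zero_rpow]
    · have h1k : (1:ℝ≥0) ≤ (k:ℝ≥0) := by exact_mod_cast hk
      calc ((k:ℝ≥0)) ^ (1/2 : ℝ) ≤ ((k:ℝ≥0)) ^ (1 : ℝ) :=
            NNReal.rpow_le_rpow_of_exponent_le h1k (by norm_num)
      _ = (k:ℝ≥0) := NNReal.rpow_one _
  have hK : (↑((Fintype.card (Fin k) : ℝ≥0) ^ ((1:ℝ≥0∞)/2).toReal) : ℝ≥0∞) ^ ((k:ℕ):ℝ)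
      ≤ ENNReal.ofReal ((k:ℝ)) ^ k := by
    calc (↑((Fintype.card (Fin k) : ℝ≥0) ^ ((1:ℝ≥0∞)/2).toReal) : ℝ≥0∞) ^ ((k:ℕ):ℝ)
        ≤ (↑(k:ℝ≥0) : ℝ≥0∞) ^ ((k:ℕ):ℝ) :=
          ENNReal.rpow_le_rpow (by exact_mod_cast e1) (by positivity)
    _ = (↑(k:ℝ≥0) : ℝ≥0∞) ^ k := ENNReal.rpow_natCast _ _
    _ = ENNReal.ofReal ((k:ℝ)) ^ k := by
        congr 1
        rw [ENNReal.ofReal_natCast]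
        simp
  refine le_trans h1 (le_trans (mul_le_mul' hK h3) ?_)
  rw [← ENNReal.ofReal_pow (by positivity), ← ENNReal.ofReal_mul (by positivity), ← mul_pow]

lemma piece_bound {n k : ℕ} {f : EuclideanSpace ℝ (Fin k) → EuclideanSpace ℝ (Fin n)}
    (hf : Isometry f) {T : Set (EuclideanSpace ℝ (Fin n))} (hTf : T ⊆ Set.range f)
    (c : EuclideanSpace ℝ (Fin n)) {ρ : ℝ} (hρ : 0 ≤ ρ) :
    μH[(k:ℝ)] (T ∩ Metric.closedBall c ρ) ≤ ENNReal.ofReal (((k:ℝ) * (4*ρ))^k) := by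
  set A := T ∩ Metric.closedBall c ρ with hA
  have hAf : A ⊆ Set.range f := fun y hy => hTf hy.1
  have himg : f '' (f ⁻¹' A) = A := by
    rw [Set.image_preimage_eq_inter_range, Set.inter_eq_self_of_subset_left hAf]
  rw [← himg, hf.hausdorffMeasure_image (Or.inl (by positivity))]
  rcases Set.eq_empty_or_nonempty (f ⁻¹' A) with he | ⟨v0, hv0⟩
  · rw [he]; simp
  · have hsub : f ⁻¹' A ⊆ Metric.closedBall v0 (2*ρ) := by
      intro v hv
      have h1 : dist (f v) c ≤ ρ := hv.2
      have h2 : dist (f v0) c ≤ ρ := hv0.2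
      have : dist v v0 = dist (f v) (f v0) := (hf.dist_eq v v0).symm
      rw [Metric.mem_closedBall, this]
      calc dist (f v) (f v0) ≤ dist (f v) c + dist c (f v0) := dist_triangle _ _ _
      _ ≤ ρ + ρ := add_le_add h1 (by rwa [dist_comm])
      _ ≤ 2 * ρ := by ring_nf; exact le_rfl
    calc μH[(k:ℝ)] (f ⁻¹' A) ≤ ENNReal.ofReal (((k:ℝ) * (2*(2*ρ)))^k) :=
          euclid_ball_bound k (by positivity) hsub
    _ = ENNReal.ofReal (((k:ℝ) * (4*ρ))^k) := by ring_nf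

set_option maxHeartbeats 1000000 in
lemma thin_convex_bound {n m : ℕ} (H : Submodule ℝ (EuclideanSpace ℝ (Fin n)))
    (hH : Module.finrank ℝ H = m)
    {f : EuclideanSpace ℝ (Fin (m+1)) → EuclideanSpace ℝ (Fin n)} (hf : Isometry f)
    {T : Set (EuclideanSpace ℝ (Fin n))} (hTf : T ⊆ Set.range f)
    (x0 : EuclideanSpace ℝ (Fin n)) {d δ : ℝ} (hd : 0 < d) (hδ : 0 < δ) (hδd : δ ≤ 2*d)
    (hTball : T ⊆ Metric.closedBall x0 d)
    (hTnear : ∀ y ∈ T, Metric.infDist y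
      ((fun v => x0 + v) '' (H : Set (EuclideanSpace ℝ (Fin n)))) ≤ δ) :
    μH[((m:ℝ)+1)] T ≤
      ENNReal.ofReal ((20:ℝ)^m * (4*((m:ℝ)+1)^2)^(m+1) * δ * d ^ m) := by
  classical
  rw [show μH[((m:ℝ)+1)] T = μH[(((m+1:ℕ)):ℝ)] T from
    congrArg (fun r : ℝ => μH[r] T) (by push_cast; ring)]
  set P := (fun v => x0 + v) '' (H : Set (EuclideanSpace ℝ (Fin n))) with hPdef
  have hPne : P.Nonempty := ⟨x0 + 0, ⟨0, H.zero_mem, rfl⟩⟩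
  have hPclosed : IsClosed P := by
    have h1 : IsClosed (H : Set (EuclideanSpace ℝ (Fin n))) :=
      Submodule.closed_of_finiteDimensional H
    exact (Homeomorph.addLeft x0).isClosedMap _ h1
  set b : OrthonormalBasis (Fin m) ℝ H := (stdOrthonormalBasis ℝ H).reindex (finCongr hH)
    with hb
  set M : ℤ := ⌈d/δ⌉ + 3 with hM
  set F : Finset (Fin m → ℤ) := Fintype.piFinset (fun _ : Fin m => Finset.Icc (-M) M) with hF
  set c : (Fin m → ℤ) → EuclideanSpace ℝ (Fin n) :=
    fun j => x0 + ∑ i, ((j i : ℝ) * δ) • ((b i : H) : EuclideanSpace ℝ (Fin n)) with hc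
  set ρ : ℝ := (1 + (m:ℝ)) * δ with hρ
  have hρpos : 0 < ρ := by positivity
  have hbnorm : ∀ i, ‖((b i : H) : EuclideanSpace ℝ (Fin n))‖ = 1 := by
    intro i
    have h2 : ‖b i‖ = 1 := b.orthonormal.1 i
    exact h2
  -- covering claim
  have cover : T ⊆ ⋃ j ∈ F, Metric.closedBall (c j) ρ := by
    intro y hy
    obtain ⟨p, hpP, hpd⟩ := hPclosed.exists_infDist_eq_dist hPne y
    have hyp0 : dist y p ≤ δ := by rw [← hpd]; exact hTnear y hy
    obtain ⟨h, hhH, rfl⟩ := hpP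
    have hyp : dist y (x0 + h) ≤ δ := hyp0
    set hh : H := ⟨h, hhH⟩ with hhh
    set t : Fin m → ℝ := fun i => b.repr hh i with ht
    have hnormh : ‖h‖ ≤ δ + d := by
      have h1 : ‖h‖ = dist (x0 + h) x0 := by
        rw [dist_eq_norm]; congr 1; abel
      rw [h1]
      calc dist (x0 + h) x0 ≤ dist (x0 + h) y + dist y x0 := dist_triangle _ _ _
      _ ≤ δ + d := add_le_add (by rw [dist_comm]; exact hyp)
            (Metric.mem_closedBall.1 (hTball hy))
    have hti : ∀ i, |t i| ≤ δ + d := by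
      intro i
      have h0 : t i = inner ℝ (b i) hh := b.repr_apply_apply hh i
      have h2 : ‖b i‖ = 1 := b.orthonormal.1 i
      have h3 : |t i| ≤ ‖b i‖ * ‖hh‖ := by rw [h0]; exact abs_real_inner_le_norm _ _
      have h4 : ‖hh‖ = ‖h‖ := rfl
      rw [h2, h4, one_mul] at h3
      exact h3.trans hnormh
    set j : Fin m → ℤ := fun i => round (t i / δ) with hj
    have hjabs : ∀ i, |(j i : ℝ)| ≤ (M : ℝ) := by
      intro i
      have h1 : |(j i : ℝ)| - |t i / δ| ≤ |(j i : ℝ) - t i / δ| := abs_sub_abs_le_abs_sub _ _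
      have h2 : |(j i : ℝ) - t i / δ| = |t i / δ - (j i : ℝ)| := abs_sub_comm _ _
      have h3 : |t i / δ - (j i : ℝ)| ≤ 1/2 := abs_sub_round _
      have h4 : |t i / δ| ≤ (δ + d)/δ := by
        rw [abs_div, abs_of_pos hδ]
        gcongr
        exact hti i
      have h5 : (δ + d)/δ = 1 + d/δ := by field_simp
      have h6 : d/δ ≤ (⌈d/δ⌉ : ℝ) := Int.le_ceil _
      have h7 : (M : ℝ) = (⌈d/δ⌉ : ℝ) + 3 := by rw [hM]; push_cast; ring
      linarith
    have hjF : j ∈ F := by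
      rw [hF, Fintype.mem_piFinset]
      intro i
      rw [Finset.mem_Icc]
      have : |j i| ≤ M := by
        have := hjabs i
        rw [← Int.cast_abs] at this
        exact_mod_cast this
      exact ⟨neg_le_of_abs_le this, le_of_abs_le this⟩
    have hsum : h = ∑ i, t i • ((b i : H) : EuclideanSpace ℝ (Fin n)) := by
      have h1 := b.sum_repr hh
      calc h = ((hh : H) : EuclideanSpace ℝ (Fin n)) := rfl
      _ = ((∑ i, t i • b i : H) : EuclideanSpace ℝ (Fin n)) := by rw [h1]
      _ = ∑ i, t i • ((b i : H) : EuclideanSpace ℝ (Fin n)) := by push_cast; rfl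
    have habs2 : ∀ i, |t i - (j i : ℝ) * δ| ≤ δ/2 := by
      intro i
      have h1 : t i - (j i : ℝ) * δ = (t i/δ - (j i : ℝ)) * δ := by
        rw [sub_mul, div_mul_cancel₀ _ hδ.ne']
      rw [h1, abs_mul, abs_of_pos hδ]
      have h2 := abs_sub_round (t i / δ)
      nlinarith
    have hdistc : dist (x0 + h) (c j) ≤ (m : ℝ) * (δ/2) := by
      rw [dist_eq_norm]
      have e1 : (x0 + h) - (c j) = ∑ i, (t i - (j i:ℝ)*δ) • ((b i : H) : EuclideanSpace ℝ (Fin n)) := by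
        rw [hc, add_sub_add_left_eq_sub, hsum, ← Finset.sum_sub_distrib]
        exact Finset.sum_congr rfl (fun i _ => (sub_smul _ _ _).symm)
      rw [e1]
      calc ‖∑ i, (t i - (j i:ℝ)*δ) • ((b i : H) : EuclideanSpace ℝ (Fin n))‖
          ≤ ∑ i, ‖(t i - (j i:ℝ)*δ) • ((b i : H) : EuclideanSpace ℝ (Fin n))‖ :=
            norm_sum_le _ _
      _ = ∑ i, |t i - (j i:ℝ)*δ| := by
          refine Finset.sum_congr rfl (fun i _ => ?_)
          rw [norm_smul, hbnorm i, mul_one, Real.norm_eq_abs]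
      _ ≤ ∑ _i : Fin m, δ/2 := Finset.sum_le_sum (fun i _ => habs2 i)
      _ = (m : ℝ) * (δ/2) := by
          rw [Finset.sum_const, Finset.card_univ, Fintype.card_fin, nsmul_eq_mul]
    refine Set.mem_biUnion hjF ?_
    rw [Metric.mem_closedBall]
    calc dist y (c j) ≤ dist y (x0 + h) + dist (x0 + h) (c j) := dist_triangle _ _ _
    _ ≤ δ + (m : ℝ) * (δ/2) := add_le_add hyp hdistc
    _ ≤ ρ := by rw [hρ]; nlinarith
  -- measure estimate
  have hmeas : ∀ j : Fin m → ℤ, μH[((m+1:ℕ):ℝ)] (T ∩ Metric.closedBall (c j) ρ) ≤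
      ENNReal.ofReal ((((m+1:ℕ):ℝ) * (4*ρ))^(m+1)) :=
    fun j => piece_bound hf hTf (c j) hρpos.le
  have hcardF : (F.card : ℝ) ≤ (20*(d/δ))^m := by
    have h1 : F.card = ((2*M+1).toNat)^m := by
      rw [hF, Fintype.card_piFinset]
      simp [Int.card_Icc]
      congr 1
      omega
    have hMpos : (0:ℤ) ≤ 2*M+1 := by
      have : (0:ℤ) < ⌈d/δ⌉ := Int.ceil_pos.2 (by positivity)
      omega
    have h2 : ((2*M+1).toNat : ℝ) = ((2*M+1 : ℤ) : ℝ) := by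
      exact_mod_cast congrArg (Int.cast : ℤ → ℝ) (Int.toNat_of_nonneg hMpos)
    have h3 : ((2*M+1 : ℤ) : ℝ) ≤ 20*(d/δ) := by
      have hceil : ((⌈d/δ⌉ : ℤ) : ℝ) < d/δ + 1 := Int.ceil_lt_add_one _
      have hhalf : (1:ℝ)/2 ≤ d/δ := by rw [le_div_iff₀ hδ]; linarith
      have hMr : ((M:ℤ):ℝ) = ((⌈d/δ⌉ : ℤ) : ℝ) + 3 := by rw [hM]; push_cast; ring
      push_cast
      push_cast at hMr
      linarith
    have h4 : ((2*M+1).toNat : ℝ) ≤ 20*(d/δ) := by rw [h2]; exact h3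
    rw [h1, Nat.cast_pow]
    exact pow_le_pow_left₀ (by positivity) h4 m
  have hreal : (F.card : ℝ) * ((((m+1:ℕ):ℝ)) * (4*ρ))^(m+1)
      ≤ (20:ℝ)^m * (4*((m:ℝ)+1)^2)^(m+1) * δ * d ^ m := by
    have hX : ((((m+1:ℕ):ℝ)) * (4*ρ))^(m+1) = (4*((m:ℝ)+1)^2*δ)^(m+1) := by
      rw [hρ]; push_cast; ring_nf
    calc (F.card : ℝ) * ((((m+1:ℕ):ℝ)) * (4*ρ))^(m+1)
        ≤ (20*(d/δ))^m * ((((m+1:ℕ):ℝ)) * (4*ρ))^(m+1) :=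
          mul_le_mul_of_nonneg_right hcardF (by positivity)
    _ = (20:ℝ)^m * (4*((m:ℝ)+1)^2)^(m+1) * δ * d ^ m := by
        rw [hX]
        have hδm : (δ:ℝ)^m ≠ 0 := pow_ne_zero _ hδ.ne'
        rw [show (20*(d/δ))^m = 20^m * d^m / δ^m by rw [mul_pow, div_pow, mul_div_assoc],
          show (4*((m:ℝ)+1)^2*δ)^(m+1) = (4*((m:ℝ)+1)^2)^(m+1) * (δ^m * δ) by
            rw [mul_pow, pow_succ δ m]]
        field_simp
  have s1 : μH[((m+1:ℕ):ℝ)] T ≤ μH[((m+1:ℕ):ℝ)] (⋃ j ∈ F, T ∩ Metric.closedBall (c j) ρ) := by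
        apply measure_mono
        intro y hy
        obtain ⟨j, hjF, hj⟩ := Set.mem_iUnion₂.1 (cover hy)
        exact Set.mem_iUnion₂.2 ⟨j, hjF, ⟨hy, hj⟩⟩
  have s2 : μH[((m+1:ℕ):ℝ)] (⋃ j ∈ F, T ∩ Metric.closedBall (c j) ρ) ≤
      ∑ j ∈ F, μH[((m+1:ℕ):ℝ)] (T ∩ Metric.closedBall (c j) ρ) :=
    measure_biUnion_finset_le F _
  have s3 : ∑ j ∈ F, μH[((m+1:ℕ):ℝ)] (T ∩ Metric.closedBall (c j) ρ) ≤
      ∑ _j ∈ F, ENNReal.ofReal ((((m+1:ℕ):ℝ) * (4*ρ))^(m+1)) :=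
    Finset.sum_le_sum (fun j _ => hmeas j)
  have s4 : ∑ _j ∈ F, ENNReal.ofReal ((((m+1:ℕ):ℝ) * (4*ρ))^(m+1)) =
      (F.card : ℝ≥0∞) * ENNReal.ofReal ((((m+1:ℕ):ℝ) * (4*ρ))^(m+1)) := by
    rw [Finset.sum_const, nsmul_eq_mul]
  have s5 : (F.card : ℝ≥0∞) * ENNReal.ofReal ((((m+1:ℕ):ℝ) * (4*ρ))^(m+1)) =
      ENNReal.ofReal ((F.card : ℝ) * (((m+1:ℕ):ℝ) * (4*ρ))^(m+1)) := by
    rw [← ENNReal.ofReal_natCast F.card, ← ENNReal.ofReal_mul (Nat.cast_nonneg _)]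
  exact s1.trans (s2.trans (s3.trans (s4.le.trans (s5.le.trans (ENNReal.ofReal_le_ofReal hreal)))))

lemma haus_zero_of_dimH_lt {n m : ℕ} {s : Set (EuclideanSpace ℝ (Fin n))}
    (h : dimH s < ((m+1:ℕ) : ℝ≥0∞)) : μH[((m:ℝ)+1)] s = 0 := by
  have h2 : dimH s < (((m+1:ℕ) : ℝ≥0) : ℝ≥0∞) := by exact_mod_cast h
  have h3 := hausdorffMeasure_of_dimH_lt h2
  have h4 : (((m+1:ℕ) : ℝ≥0) : ℝ) = (m:ℝ)+1 := by push_cast; ring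
  rwa [h4] at h3

lemma dimH_le_of_subset_isometry {n k : ℕ}
    {g : EuclideanSpace ℝ (Fin k) → EuclideanSpace ℝ (Fin n)} (hg : Isometry g)
    {s : Set (EuclideanSpace ℝ (Fin n))} (hs : s ⊆ Set.range g) : dimH s ≤ (k : ℝ≥0∞) := by
  calc dimH s ≤ dimH (g '' Set.univ) := dimH_mono (by rwa [Set.image_univ])
  _ ≤ dimH (Set.univ : Set (EuclideanSpace ℝ (Fin k))) := by
      simpa using hg.lipschitz.dimH_image_le Set.univ
  _ = (Module.finrank ℝ (EuclideanSpace ℝ (Fin k)) : ℝ≥0∞) :=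
      Real.dimH_univ_eq_finrank _
  _ = (k : ℝ≥0∞) := by rw [finrank_euclideanSpace, Fintype.card_fin]

lemma exists_isometry_submodule {n k : ℕ} (W : Submodule ℝ (EuclideanSpace ℝ (Fin n)))
    (hW : Module.finrank ℝ W = k) (x0 : EuclideanSpace ℝ (Fin n)) :
    ∃ g : EuclideanSpace ℝ (Fin k) → EuclideanSpace ℝ (Fin n), Isometry g ∧
      (fun v => x0 + v) '' (W : Set (EuclideanSpace ℝ (Fin n))) ⊆ Set.range g := by
  set bW : OrthonormalBasis (Fin k) ℝ W := (stdOrthonormalBasis ℝ W).reindex (finCongr hW)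
  refine ⟨fun w => x0 + ((bW.repr.symm w : W) : EuclideanSpace ℝ (Fin n)),
    Isometry.of_dist_eq (fun a b => ?_), ?_⟩
  · rw [dist_add_left]
    have h1 : dist ((bW.repr.symm a : W) : EuclideanSpace ℝ (Fin n))
        ((bW.repr.symm b : W) : EuclideanSpace ℝ (Fin n)) = dist (bW.repr.symm a) (bW.repr.symm b) := rfl
    rw [h1]
    exact bW.repr.symm.dist_map a b
  · rintro y ⟨v, hv, rfl⟩
    exact ⟨bW.repr ⟨v, hv⟩, by simp⟩

lemma exists_submodule_finrank {m n : ℕ} (h : m ≤ n) :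
    ∃ H : Submodule ℝ (EuclideanSpace ℝ (Fin n)), Module.finrank ℝ H = m := by
  have li : LinearIndependent ℝ
      (fun i : Fin m => (EuclideanSpace.basisFun (Fin n) ℝ) (Fin.castLE h i)) :=
    ((EuclideanSpace.basisFun (Fin n) ℝ).orthonormal.linearIndependent).comp
      (Fin.castLE h) (Fin.castLE_injective h)
  exact ⟨Submodule.span ℝ (Set.range _), by
    rw [finrank_span_eq_card li, Fintype.card_fin]⟩


set_option maxHeartbeats 1000000 in
/-- For `m+2` points `x₀,…,x_{m+1}` of a set `Σ ⊆ ℝⁿ`, with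
`T = conv(x₀,…,x_{m+1})` and `d = diam{x₀,…,x_{m+1}}`, there is `C = C(m,n)` with
`H^{m+1}(T) ≤ C β_Σ^m(x₀,d) d^{m+1}`, hence `K(x₀,…,x_{m+1}) ≤ C β_Σ^m(x₀,d)/d`. -/
theorem simplex_measure_le_beta (m n : ℕ) :
    ∃ C : ℝ, 0 < C ∧
      ∀ (S : Set (EuclideanSpace ℝ (Fin n))) (x : Fin (m + 2) → EuclideanSpace ℝ (Fin n)),
        (∀ i, x i ∈ S) →
        μH[(m + 1 : ℝ)] (convexHull ℝ (Set.range x))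
            ≤ ENNReal.ofReal (C * jonesBeta m S (x 0) (Metric.diam (Set.range x))
                * Metric.diam (Set.range x) ^ (m + 1))
          ∧ discreteCurv m x
            ≤ C * jonesBeta m S (x 0) (Metric.diam (Set.range x))
                / Metric.diam (Set.range x) := by
  classical
  set C : ℝ := (20:ℝ)^m * (4*((m:ℝ)+1)^2)^(m+1) + 1 with hCdef
  have hC' : (0:ℝ) < (20:ℝ)^m * (4*((m:ℝ)+1)^2)^(m+1) := by positivity
  have hCpos : 0 < C := by positivity
  refine ⟨C, hCpos, fun S x hx => ?_⟩
  set d : ℝ := Metric.diam (Set.range x) with hd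
  set β : ℝ := jonesBeta m S (x 0) d with hβ
  set T : Set (EuclideanSpace ℝ (Fin n)) := convexHull ℝ (Set.range x) with hT
  have hd0 : 0 ≤ d := Metric.diam_nonneg
  have hβ0 : 0 ≤ β := by
    rw [hβ]; unfold jonesBeta
    apply Real.iInf_nonneg; intro H
    apply Real.iSup_nonneg; intro y
    exact div_nonneg Metric.infDist_nonneg hd0
  have hbd : Bornology.IsBounded (Set.range x) := (Set.finite_range x).isBounded
  have hdistd : ∀ i, dist (x i) (x 0) ≤ d :=
    fun i => Metric.dist_le_diam_of_mem hbd ⟨i, rfl⟩ ⟨0, rfl⟩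
  have part1 : μH[((m:ℝ) + 1)] T ≤ ENNReal.ofReal (C * β * d ^ (m + 1)) := by
    by_cases hnm : n ≤ m
    · have hz : μH[((m:ℝ)+1)] T = 0 := by
        apply haus_zero_of_dimH_lt
        calc dimH T ≤ dimH (Set.univ : Set (EuclideanSpace ℝ (Fin n))) :=
              dimH_mono (Set.subset_univ _)
        _ = (Module.finrank ℝ (EuclideanSpace ℝ (Fin n)) : ℝ≥0∞) :=
              Real.dimH_univ_eq_finrank _
        _ = (n : ℝ≥0∞) := by rw [finrank_euclideanSpace, Fintype.card_fin]
        _ < ((m+1:ℕ) : ℝ≥0∞) := by exact_mod_cast Nat.lt_succ_of_le hnm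
      rw [hz]; exact zero_le
    push_neg at hnm
    rcases eq_or_lt_of_le hd0 with hdz | hdpos
    · have hrange : Set.range x = {x 0} := by
        apply Set.Subset.antisymm
        · rintro y ⟨i, rfl⟩
          have h1 := hdistd i
          rw [← hdz] at h1
          simpa using le_antisymm h1 dist_nonneg
        · exact Set.singleton_subset_iff.2 ⟨0, rfl⟩
      have hz : μH[((m:ℝ)+1)] T = 0 := by
        rw [hT, hrange, convexHull_singleton]
        exact haus_zero_of_dimH_lt
          (by rw [dimH_singleton]; exact_mod_cast Nat.succ_pos m)
      rw [hz]; exact zero_le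
    -- main case
    set v : Fin (m+1) → EuclideanSpace ℝ (Fin n) := fun i => x i.succ - x 0 with hv
    set V : Submodule ℝ (EuclideanSpace ℝ (Fin n)) := Submodule.span ℝ (Set.range v) with hV
    have hTV : T ⊆ (fun w => x 0 + w) '' (V : Set (EuclideanSpace ℝ (Fin n))) := by
      rw [hT]
      apply convexHull_min
      · rintro y ⟨i, rfl⟩
        rcases Fin.eq_zero_or_eq_succ i with rfl | ⟨j, rfl⟩
        · exact ⟨0, V.zero_mem, by simp⟩
        · exact ⟨v j, Submodule.subset_span ⟨j, rfl⟩, by simp [hv]⟩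
      · exact V.convex.translate _
    have hVle : Module.finrank ℝ V ≤ m+1 := by
      have h1 := finrank_span_le_card (R := ℝ) (Set.range v)
      have h2 : (Set.range v).toFinset.card ≤ m+1 := by
        rw [Set.toFinset_card]
        simpa using Fintype.card_range_le v
      exact le_trans h1 h2
    rcases le_or_gt (Module.finrank ℝ V) m with hVm | hVm
    · obtain ⟨g, hg, hrg⟩ := exists_isometry_submodule V rfl (x 0)
      have hz : μH[((m:ℝ)+1)] T = 0 := by
        apply haus_zero_of_dimH_lt
        calc dimH T ≤ ((Module.finrank ℝ V : ℕ) : ℝ≥0∞) :=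
              dimH_le_of_subset_isometry hg (hTV.trans hrg)
        _ < ((m+1:ℕ):ℝ≥0∞) := by exact_mod_cast Nat.lt_succ_of_le hVm
      rw [hz]; exact zero_le
    have hVrank : Module.finrank ℝ V = m+1 := le_antisymm hVle hVm
    obtain ⟨g, hg, hrg⟩ := exists_isometry_submodule V hVrank (x 0)
    have hTg : T ⊆ Set.range g := hTV.trans hrg
    have hx0ball : x 0 ∈ S ∩ Metric.closedBall (x 0) d := ⟨hx 0, Metric.mem_closedBall_self hd0⟩
    haveI hne1 : Nonempty ↥(S ∩ Metric.closedBall (x 0) d) := ⟨⟨x 0, hx0ball⟩⟩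
    haveI hne2 : Nonempty {H : Submodule ℝ (EuclideanSpace ℝ (Fin n)) //
        Module.finrank ℝ H = m} := by
      obtain ⟨H0, hH0⟩ := exists_submodule_finrank (le_of_lt hnm)
      exact ⟨⟨H0, hH0⟩⟩
    have hbddB : BddBelow (Set.range
        (fun Hs : {H : Submodule ℝ (EuclideanSpace ℝ (Fin n)) // Module.finrank ℝ H = m} =>
          ⨆ y : ↥(S ∩ Metric.closedBall (x 0) d),
            Metric.infDist (y : EuclideanSpace ℝ (Fin n))
              ((fun v => x 0 + v) '' (Hs.1 : Set (EuclideanSpace ℝ (Fin n)))) / d)) := by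
      refine ⟨0, ?_⟩
      rintro _ ⟨Hs, rfl⟩
      exact Real.iSup_nonneg (fun y => div_nonneg Metric.infDist_nonneg hd0)
    have hβ1 : β ≤ 1 := by
      obtain ⟨H0⟩ := hne2
      have hx0P0 : x 0 ∈ (fun v => x 0 + v) '' (H0.1 : Set (EuclideanSpace ℝ (Fin n))) :=
        ⟨0, H0.1.zero_mem, by simp⟩
      have h1 : β ≤ ⨆ y : ↥(S ∩ Metric.closedBall (x 0) d),
          Metric.infDist (y : EuclideanSpace ℝ (Fin n))
            ((fun v => x 0 + v) '' (H0.1 : Set (EuclideanSpace ℝ (Fin n)))) / d := by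
        rw [hβ]; unfold jonesBeta
        exact ciInf_le hbddB H0
      have h2 : (⨆ y : ↥(S ∩ Metric.closedBall (x 0) d),
          Metric.infDist (y : EuclideanSpace ℝ (Fin n))
            ((fun v => x 0 + v) '' (H0.1 : Set (EuclideanSpace ℝ (Fin n)))) / d) ≤ 1 := by
        apply ciSup_le
        intro y
        refine (div_le_one hdpos).2 ?_
        exact le_trans (Metric.infDist_le_dist_of_mem hx0P0) (Metric.mem_closedBall.1 y.2.2)
      linarith
    have key : ∀ k : ℕ, μH[((m:ℝ)+1)] T ≤
        ENNReal.ofReal (C * (β + 1/((k:ℝ)+1)) * d^(m+1)) := by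
      intro k
      set β' : ℝ := β + 1/((k:ℝ)+1) with hβ'def
      have hββ' : β < β' := lt_add_of_pos_right β (by positivity)
      have hβ'pos : 0 < β' := lt_of_le_of_lt hβ0 hββ'
      have hβ'2 : β' ≤ 2 := by
        have : 1/((k:ℝ)+1) ≤ 1 := by
          rw [div_le_one (by positivity)]
          linarith [Nat.cast_nonneg (α := ℝ) k]
        rw [hβ'def]; linarith
      have hinf_lt : jonesBeta m S (x 0) d < β' := by rw [← hβ]; exact hββ'
      unfold jonesBeta at hinf_lt
      obtain ⟨H, hH⟩ := exists_lt_of_ciInf_lt hinf_lt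
      set P : Set (EuclideanSpace ℝ (Fin n)) :=
        (fun v => x 0 + v) '' (H.1 : Set (EuclideanSpace ℝ (Fin n))) with hPdef
      have hx0P : x 0 ∈ P := ⟨0, H.1.zero_mem, by simp⟩
      have hPne : P.Nonempty := ⟨x 0, hx0P⟩
      have hPclosed : IsClosed P :=
        (Homeomorph.addLeft (x 0)).isClosedMap _ (Submodule.closed_of_finiteDimensional H.1)
      have hbddA : BddAbove (Set.range (fun y : ↥(S ∩ Metric.closedBall (x 0) d) =>
          Metric.infDist (y : EuclideanSpace ℝ (Fin n)) P / d)) := by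
        refine ⟨1, ?_⟩
        rintro _ ⟨y, rfl⟩
        refine (div_le_one hdpos).2 ?_
        exact le_trans (Metric.infDist_le_dist_of_mem hx0P) (Metric.mem_closedBall.1 y.2.2)
      have hiB : ∀ i, Metric.infDist (x i) P ≤ β' * d := by
        intro i
        have h2 : Metric.infDist (x i) P / d ≤ ⨆ y : ↥(S ∩ Metric.closedBall (x 0) d),
            Metric.infDist (y : EuclideanSpace ℝ (Fin n)) P / d :=
          le_ciSup hbddA ⟨x i, ⟨hx i, Metric.mem_closedBall.2 (hdistd i)⟩⟩
        exact le_of_lt ((div_lt_iff₀ hdpos).1 (lt_of_le_of_lt h2 hH))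
      have hTnear : ∀ y ∈ T, Metric.infDist y P ≤ β' * d := by
        have hsub : T ⊆ Metric.cthickening (β'*d) P := by
          rw [hT]
          apply convexHull_min
          · rintro z ⟨i, rfl⟩
            obtain ⟨p, hp, hpd⟩ := hPclosed.exists_infDist_eq_dist hPne (x i)
            have hdp : dist (x i) p ≤ β' * d := by rw [← hpd]; exact hiB i
            exact Metric.mem_cthickening_of_dist_le _ p _ _ hp hdp
          · exact ((H.1.convex).translate (x 0)).cthickening _
        intro y hy
        have h1 := (Metric.mem_cthickening_iff).1 (hsub hy)
        have h2 : (EMetric.infEdist y P).toReal ≤ β' * d :=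
          ENNReal.toReal_le_of_le_ofReal (by positivity) h1
        exact h2
      have hTball : T ⊆ Metric.closedBall (x 0) d := by
        rw [hT]
        apply convexHull_min
        · rintro z ⟨i, rfl⟩
          exact Metric.mem_closedBall.2 (hdistd i)
        · exact convex_closedBall _ _
      have hδd : β' * d ≤ 2 * d := mul_le_mul_of_nonneg_right hβ'2 hd0
      have hmain := thin_convex_bound H.1 H.2 hg hTg (x 0) hdpos (by positivity) hδd
        hTball hTnear
      refine hmain.trans (ENNReal.ofReal_le_ofReal ?_)
      have h5 : (20:ℝ)^m * (4*((m:ℝ)+1)^2)^(m+1) ≤ C := by rw [hCdef]; linarith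
      have e3 : (20:ℝ)^m * (4*((m:ℝ)+1)^2)^(m+1) * (β'*d) * d^m
          = ((20:ℝ)^m * (4*((m:ℝ)+1)^2)^(m+1)) * (β' * d^(m+1)) := by
        rw [pow_succ]; ring
      have e2 : C * β' * d^(m+1) = C * (β' * d^(m+1)) := by ring
      rw [e3, e2]
      exact mul_le_mul_of_nonneg_right h5 (by positivity)
    have t1 : Filter.Tendsto (fun k : ℕ => β + 1/((k:ℝ)+1)) Filter.atTop (nhds β) := by
      have h0 := tendsto_one_div_add_atTop_nhds_zero_nat (𝕜 := ℝ)
      simpa using (tendsto_const_nhds (x := β) (f := Filter.atTop)).add h0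
    have t2 : Filter.Tendsto (fun k : ℕ => ENNReal.ofReal (C * (β + 1/((k:ℝ)+1)) * d^(m+1)))
        Filter.atTop (nhds (ENNReal.ofReal (C * β * d^(m+1)))) := by
      apply (ENNReal.continuous_ofReal.tendsto _).comp
      have h1 := (t1.const_mul C).mul_const (d^(m+1))
      simpa using h1
    exact ge_of_tendsto' t2 key
  have hRHS1 : 0 ≤ C * β * d ^ (m+1) := by positivity
  refine ⟨part1, ?_⟩
  rcases eq_or_lt_of_le hd0 with hdz | hdpos
  · unfold discreteCurv
    rw [← hd, ← hdz]
    simp [zero_pow (by omega : m + 2 ≠ 0)]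
  · have hne : μH[((m:ℝ)+1)] T ≠ ⊤ := (lt_of_le_of_lt part1 ENNReal.ofReal_lt_top).ne
    have h1 : (μH[((m:ℝ)+1)] T).toReal ≤ C * β * d ^ (m+1) :=
      ENNReal.toReal_le_of_le_ofReal hRHS1 part1
    unfold discreteCurv
    rw [← hd, ← hT]
    have h2 : (μH[((m:ℝ)+1)] T).toReal / d ^ (m+2) ≤ (C * β * d ^ (m+1)) / d ^ (m+2) := by
      apply div_le_div_of_nonneg_right h1 (by positivity) |>.trans_eq rfl
    have h3 : (C * β * d ^ (m+1)) / d ^ (m+2) = C * β / d := by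
      field_simp
      ring
    calc (μH[((m:ℝ)+1)] T).toReal / d ^ (m+2) ≤ (C * β * d ^ (m+1)) / d ^ (m+2) := h2
    _ = C * β / d := h3
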